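/- Let K be a nonempty finite set partitioned into a nonempty subset K_W and a subset K_B, V a generator matrix on K, R a stochastic matrix on K, and λ > 0 such that λ·I_W − V is invertible. Suppose the row vector θ : K → ℝ solves the continuous-time environment equation θ·( λ·(I_W·R − I_W) + V ) = 0 and satisfies s := Σ_{k∈K_W} θ(k) ≠ 0. Then the row vector θ̂ := s^{-1}·θ·I_W·R solves the embedded-chain environment equation θ̂ · λ·(λ·I_W − V)^{-1}·I_W·R = θ̂. Moreover, if θ has nonnegative entries and Σ_{k∈K} θ(k) = 1, then θ̂ has nonnegative entries with Σ_{k∈K} θ̂(k) = 1, i.e. θ̂ is a probability vector. -/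

import Mathlib

/-- If θ solves the continuous-time environment equation
θ·(λ(I_W·R − I_W) + V) = 0 with Σ_{k∈K_W} θ(k) = s ≠ 0, then
θ̂ = s⁻¹·θ·I_W·R solves the embedded-chain environment equation
θ̂·λ·(λ·I_W − V)⁻¹·I_W·R = θ̂; if θ is a probability vector then so is θ̂. -/
theorem stmt_14 {K : Type*} [Fintype K] [DecidableEq K] [Nonempty K]
    (KW KB : Set K) [∀ k, Decidable (k ∈ KW)] (hKW : KW.Nonempty)
    (hpart : ∀ k : K, k ∈ KW ↔ k ∉ KB)
    (IW : Matrix K K ℝ)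
    (hIW : IW = Matrix.diagonal (fun k => if k ∈ KW then (1:ℝ) else 0))
    (V : Matrix K K ℝ)
    (hV_offdiag : ∀ k m, k ≠ m → 0 ≤ V k m) (hV_row : ∀ k, ∑ m, V k m = 0)
    (R : Matrix K K ℝ)
    (hR_nonneg : ∀ k m, 0 ≤ R k m) (hR_row : ∀ k, ∑ m, R k m = 1)
    (lam : ℝ) (hlam : 0 < lam)
    (hinv : IsUnit (lam • IW - V))
    (θ : K → ℝ)
    (hθ : Matrix.vecMul θ (lam • (IW * R - IW) + V) = 0)
    (s : ℝ) (hs : s = ∑ k ∈ Finset.univ.filter (fun k => k ∈ KW), θ k)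
    (hs_ne : s ≠ 0)
    (θhat : K → ℝ) (hθhat : θhat = s⁻¹ • Matrix.vecMul θ (IW * R)) :
    Matrix.vecMul θhat (lam • ((lam • IW - V)⁻¹ * IW * R)) = θhat ∧
    ((∀ k, 0 ≤ θ k) → (∑ k, θ k = 1) →
      (∀ k, 0 ≤ θhat k) ∧ ∑ k, θhat k = 1) := by
  set A := lam • IW - V with hA
  have hAinv : A * A⁻¹ = 1 :=
    Matrix.mul_nonsing_inv A ((Matrix.isUnit_iff_isUnit_det A).mp hinv)
  have hrw : lam • (IW * R - IW) + V = lam • (IW * R) - A := by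
    rw [hA]; module
  have key : Matrix.vecMul θ (lam • (IW * R)) = Matrix.vecMul θ A := by
    have h0 : Matrix.vecMul θ (lam • (IW * R) - A) = 0 := by rw [← hrw]; exact hθ
    rw [Matrix.vecMul_sub] at h0
    exact sub_eq_zero.mp h0
  constructor
  · calc Matrix.vecMul θhat (lam • (A⁻¹ * IW * R))
        = s⁻¹ • Matrix.vecMul (Matrix.vecMul θ (IW * R)) (lam • (A⁻¹ * IW * R)) := by
          rw [hθhat, Matrix.smul_vecMul]
      _ = s⁻¹ • Matrix.vecMul θ ((lam • (IW * R)) * (A⁻¹ * (IW * R))) := by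
          rw [Matrix.vecMul_vecMul]
          congr 1
          simp only [Matrix.mul_smul, Matrix.smul_mul, Matrix.mul_assoc]
      _ = s⁻¹ • Matrix.vecMul (Matrix.vecMul θ (lam • (IW * R))) (A⁻¹ * (IW * R)) := by
          rw [Matrix.vecMul_vecMul]
      _ = s⁻¹ • Matrix.vecMul θ (A * (A⁻¹ * (IW * R))) := by
          rw [key, Matrix.vecMul_vecMul]
      _ = s⁻¹ • Matrix.vecMul θ (IW * R) := by
          rw [← Matrix.mul_assoc, hAinv, Matrix.one_mul]
      _ = θhat := hθhat.symm
  · intro hnn hsum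
    have hspos : 0 < s := by
      rcases lt_or_eq_of_le (Finset.sum_nonneg (fun k _ => hnn k)) with h | h
      · rw [hs]; exact h
      · exact absurd (hs.trans h.symm) hs_ne
    have hent : ∀ k, θhat k = s⁻¹ * ∑ m, θ m * ((if m ∈ KW then (1:ℝ) else 0) * R m k) := by
      intro k
      rw [hθhat]
      simp only [Pi.smul_apply, smul_eq_mul, Matrix.vecMul, dotProduct, hIW,
        Matrix.diagonal_mul]
    constructor
    · intro k
      rw [hent k]
      apply mul_nonneg (le_of_lt (inv_pos.mpr hspos))
      apply Finset.sum_nonneg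
      intro m _
      apply mul_nonneg (hnn m)
      apply mul_nonneg _ (hR_nonneg m k)
      split <;> norm_num
    · have : ∑ k, θhat k = s⁻¹ * ∑ m, θ m * (if m ∈ KW then (1:ℝ) else 0) := by
        simp only [hent, ← Finset.mul_sum]
        congr 1
        rw [Finset.sum_comm]
        congr 1; ext m
        rw [← Finset.mul_sum, ← Finset.mul_sum, hR_row]
        ring
      rw [this]
      have : ∑ m, θ m * (if m ∈ KW then (1:ℝ) else 0) = s := by
        rw [hs, Finset.sum_filter]
        congr 1; ext m
        split <;> ring
      rw [this, inv_mul_cancel₀ hs_ne]
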